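/- Let T be a nonexpansive self-map of a real Hilbert space with Fix(T) ≠ ∅, let (βₙ) be a summable sequence in [0,1], and let (Yₙ) be a sequence with ‖Yₙ‖ ≤ ‖Xₙ‖ for all n, where X_{n+1} = T(Xₙ + βₙYₙ). Then the sequence (Yₙ) is bounded. -/
import Mathlib


/-- If `T` is a nonexpansive self-map of a real Hilbert space with a fixed point,
`(βₙ)` is a summable sequence in `[0,1]`, and `X_{n+1} = T(Xₙ + βₙYₙ)` with
`‖Yₙ‖ ≤ ‖Xₙ‖` for all `n`, then the sequence `(Yₙ)` is bounded. -/
theorem perturbations_bounded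
    {H : Type*} [NormedAddCommGroup H] [InnerProductSpace ℝ H]
    (T : H → H) (hT : ∀ x y, ‖T x - T y‖ ≤ ‖x - y‖)
    (hFix : ∃ z, T z = z)
    (β : ℕ → ℝ) (hβ : ∀ n, β n ∈ Set.Icc (0 : ℝ) 1) (hβs : Summable β)
    (X Y : ℕ → H)
    (hXY : ∀ n, ‖Y n‖ ≤ ‖X n‖)
    (hrec : ∀ n, X (n + 1) = T (X n + β n • Y n)) :
    ∃ R : ℝ, ∀ n, ‖Y n‖ ≤ R := by
  obtain ⟨z, hz⟩ := hFix
  set b : ℕ → ℝ := fun n => ‖X n - z‖ + ‖z‖ with hb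
  have hbnn : ∀ n, 0 ≤ b n := fun n => add_nonneg (norm_nonneg _) (norm_nonneg _)
  have hstep : ∀ n, b (n + 1) ≤ (1 + β n) * b n := by
    intro n
    have h1 : ‖X (n+1) - z‖ ≤ ‖X n + β n • Y n - z‖ := by
      rw [hrec n]
      calc ‖T (X n + β n • Y n) - z‖ = ‖T (X n + β n • Y n) - T z‖ := by rw [hz]
        _ ≤ ‖X n + β n • Y n - z‖ := hT _ _
    have h2 : ‖X n + β n • Y n - z‖ ≤ ‖X n - z‖ + β n * ‖Y n‖ := by
      have : X n + β n • Y n - z = (X n - z) + β n • Y n := by abel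
      rw [this]
      calc ‖(X n - z) + β n • Y n‖ ≤ ‖X n - z‖ + ‖β n • Y n‖ := norm_add_le _ _
        _ = ‖X n - z‖ + |β n| * ‖Y n‖ := by rw [norm_smul, Real.norm_eq_abs]
        _ = ‖X n - z‖ + β n * ‖Y n‖ := by rw [abs_of_nonneg (hβ n).1]
    have h3 : ‖Y n‖ ≤ b n := le_trans (hXY n) (by
      calc ‖X n‖ = ‖(X n - z) + z‖ := by congr 1; abel
        _ ≤ ‖X n - z‖ + ‖z‖ := norm_add_le _ _)
    have hβn := (hβ n).1
    calc b (n+1) = ‖X (n+1) - z‖ + ‖z‖ := rfl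
      _ ≤ ‖X n - z‖ + β n * ‖Y n‖ + ‖z‖ := by linarith [le_trans h1 h2]
      _ ≤ b n + β n * b n := by
          have := mul_le_mul_of_nonneg_left h3 hβn
          simp only [hb] at this ⊢; linarith
      _ = (1 + β n) * b n := by ring
  -- b n ≤ b 0 * exp (∑ k in range n, β k)
  have hbound : ∀ n, b n ≤ b 0 * Real.exp (∑ k ∈ Finset.range n, β k) := by
    intro n
    induction n with
    | zero => simp
    | succ n ih =>
      calc b (n+1) ≤ (1 + β n) * b n := hstep n
        _ ≤ Real.exp (β n) * (b 0 * Real.exp (∑ k ∈ Finset.range n, β k)) := by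
            apply mul_le_mul _ ih (hbnn n) (Real.exp_nonneg _)
            linarith [Real.add_one_le_exp (β n)]
        _ = b 0 * Real.exp (∑ k ∈ Finset.range (n+1), β k) := by
            rw [Finset.sum_range_succ, Real.exp_add]; ring
  have hβnn : ∀ n, 0 ≤ β n := fun n => (hβ n).1
  have hpartial : ∀ n, ∑ k ∈ Finset.range n, β k ≤ ∑' k, β k := fun n =>
    Summable.sum_le_tsum _ (fun i _ => hβnn i) hβs
  refine ⟨b 0 * Real.exp (∑' k, β k), fun n => ?_⟩
  have h3 : ‖Y n‖ ≤ b n := le_trans (hXY n) (by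
    calc ‖X n‖ = ‖(X n - z) + z‖ := by congr 1; abel
      _ ≤ ‖X n - z‖ + ‖z‖ := norm_add_le _ _)
  calc ‖Y n‖ ≤ b n := h3
    _ ≤ b 0 * Real.exp (∑ k ∈ Finset.range n, β k) := hbound n
    _ ≤ b 0 * Real.exp (∑' k, β k) := by
        apply mul_le_mul_of_nonneg_left _ (hbnn 0)
        exact Real.exp_le_exp.mpr (hpartial n)
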